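/- Monotonicity of register protocols (copycat lemma): for any register protocol and configurations γ_1, γ_2, γ_2', if γ_1 →* γ_2 and γ_2 ⪯ γ_2', then there exists a configuration γ_1' such that γ_1 ⪯ γ_1' and γ_1' →* γ_2'. -/

import Mathlib

/-- Operation type of a register protocol: read or write. -/
inductive Op : Type
  | R : Op
  | W : Op
deriving DecidableEq

instance instFintypeOp : Fintype Op :=
  ⟨{Op.R, Op.W}, by intro x; cases x <;> simp⟩

/-- A location has at least one outgoing transition. -/
def Nonblock {Q D : Type*} (T : Set (Q × Op × D × Q)) : Prop :=
  ∀ q : Q, ∃ op d q', (q, op, d, q') ∈ T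

/-- Whenever a read transition exists from `q`, reads of every datum are enabled in `q`. -/
def ReadTotal {Q D : Type*} (T : Set (Q × Op × D × Q)) : Prop :=
  ∀ q d' q', (q, Op.R, d', q') ∈ T → ∀ d : D, ∃ qd, (q, Op.R, d, qd) ∈ T

/-- One step of the distributed system associated with transition set `T`:
a configuration is a pair of a finite multiset of locations and a register datum. -/
def IsStep {Q D : Type*} [DecidableEq Q] (T : Set (Q × Op × D × Q)) :
    Multiset Q × D → Multiset Q × D → Prop := fun γ γ' =>
  ∃ q op d'' q', (q, op, d'', q') ∈ T ∧ q ∈ γ.1 ∧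
    γ'.1 = γ.1 - {q} + {q'} ∧
    ((op = Op.R ∧ γ.2 = d'' ∧ γ'.2 = d'') ∨ (op = Op.W ∧ γ'.2 = d''))

/-- Reachability: reflexive-transitive closure of the step relation. -/
def Reach {Q D : Type*} [DecidableEq Q] (T : Set (Q × Op × D × Q)) :
    Multiset Q × D → Multiset Q × D → Prop :=
  Relation.ReflTransGen (IsStep T)

/-- `PostStar T S` is the set of configurations reachable from some configuration of `S`. -/
def PostStar {Q D : Type*} [DecidableEq Q] (T : Set (Q × Op × D × Q))
    (S : Set (Multiset Q × D)) : Set (Multiset Q × D) :=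
  {γ' | ∃ γ ∈ S, Reach T γ γ'}

/-- `PreStar T S` is the set of configurations from which some configuration of `S`
is reachable. -/
def PreStar {Q D : Type*} [DecidableEq Q] (T : Set (Q × Op × D × Q))
    (S : Set (Multiset Q × D)) : Set (Multiset Q × D) :=
  {γ | ∃ γ' ∈ S, Reach T γ γ'}

/-- `[qf]`: configurations containing at least one process in location `qf`. -/
def TargetSet {Q D : Type*} [DecidableEq Q] (qf : Q) : Set (Multiset Q × D) :=
  {γ | 0 < γ.1.count qf}

/-- The order `⪯` on configurations: same register content, same support,
and componentwise smaller multiset. -/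
def ConfLE {Q D : Type*} [DecidableEq Q] (γ γ' : Multiset Q × D) : Prop :=
  γ.2 = γ'.2 ∧ γ.1.toFinset = γ'.1.toFinset ∧ γ.1 ≤ γ'.1

/-- Upward closure of a set of configurations with respect to `⪯`. -/
def UpSet {Q D : Type*} [DecidableEq Q] (B : Set (Multiset Q × D)) :
    Set (Multiset Q × D) :=
  {γ' | ∃ γ ∈ B, ConfLE γ γ'}

/-- Repeating a single transition `n+1` times. -/
lemma steps_repeat {Q D : Type*} [DecidableEq Q] (T : Set (Q × Op × D × Q))
    {q : Q} {op : Op} {d : D} {q' : Q} (hT : (q, op, d, q') ∈ T) :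
    ∀ n : ℕ, ∀ μ : Multiset Q, ∀ dr : D, (op = Op.R → dr = d) →
      Multiset.replicate (n + 1) q ≤ μ →
      Reach T (μ, dr)
        (μ - Multiset.replicate (n + 1) q + Multiset.replicate (n + 1) q', d) := by
  intro n
  induction n with
  | zero =>
    intro μ dr hR hle
    have hq : q ∈ μ := by
      have := Multiset.le_iff_count.mp hle q
      simp [Multiset.count_replicate] at this
      exact Multiset.count_pos.mp (by omega)
    refine Relation.ReflTransGen.single ⟨q, op, d, q', hT, hq, ?_, ?_⟩
    · simp [Multiset.replicate_one]
    · cases op with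
      | R => exact Or.inl ⟨rfl, hR rfl, rfl⟩
      | W => exact Or.inr ⟨rfl, rfl⟩
  | succ n ih =>
    intro μ dr hR hle
    have hcnt : n + 2 ≤ μ.count q := by
      have := Multiset.le_iff_count.mp hle q
      simp [Multiset.count_replicate] at this; omega
    have hq : q ∈ μ := Multiset.count_pos.mp (by omega)
    have step1 : IsStep T (μ, dr)
        (μ - Multiset.replicate 1 q + Multiset.replicate 1 q', d) := by
      refine ⟨q, op, d, q', hT, hq, by simp [Multiset.replicate_one], ?_⟩
      cases op with
      | R => exact Or.inl ⟨rfl, hR rfl, rfl⟩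
      | W => exact Or.inr ⟨rfl, rfl⟩
    have hle2 : Multiset.replicate (n + 1) q
        ≤ μ - Multiset.replicate 1 q + Multiset.replicate 1 q' := by
      rw [Multiset.le_iff_count]
      intro a
      have h1 := Multiset.le_iff_count.mp hle a
      simp only [Multiset.count_add, Multiset.count_sub, Multiset.count_replicate] at h1 ⊢
      rcases eq_or_ne q a with hqa | hqa <;> rcases eq_or_ne q' a with hqb | hqb <;>
        simp only [hqa, hqb, eq_self_iff_true, if_true, if_false] at h1 ⊢ <;> omega
    have h2 := ih (μ - Multiset.replicate 1 q + Multiset.replicate 1 q') d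
      (fun _ => rfl) hle2
    have heq : (μ - Multiset.replicate 1 q + Multiset.replicate 1 q')
        - Multiset.replicate (n + 1) q + Multiset.replicate (n + 1) q'
        = μ - Multiset.replicate (n + 2) q + Multiset.replicate (n + 2) q' := by
      ext a
      have h1 := Multiset.le_iff_count.mp hle a
      simp only [Multiset.count_add, Multiset.count_sub, Multiset.count_replicate] at h1 ⊢
      rcases eq_or_ne q a with hqa | hqa <;> rcases eq_or_ne q' a with hqb | hqb <;>
        simp only [hqa, hqb, eq_self_iff_true, if_true, if_false] at h1 ⊢ <;> omega
    rw [heq] at h2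
    exact Relation.ReflTransGen.head step1 h2

/-- Lifting a single step backwards along `⪯`. -/
lemma lift_step {Q D : Type*} [DecidableEq Q] (T : Set (Q × Op × D × Q))
    {b c c' : Multiset Q × D} (hstep : IsStep T b c) (h : ConfLE c c') :
    ∃ b', ConfLE b b' ∧ Reach T b' c' := by
  obtain ⟨q, op, d, q', hT, hq, hν, hreg⟩ := hstep
  obtain ⟨hd, hsupp, hle⟩ := h
  obtain ⟨e, he⟩ : ∃ e : Multiset Q, c'.1 - c.1 = e := ⟨_, rfl⟩
  obtain ⟨k, hk⟩ : ∃ k : ℕ, e.count q' = k := ⟨_, rfl⟩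
  obtain ⟨e', he'⟩ : ∃ e' : Multiset Q,
      e - Multiset.replicate k q' + Multiset.replicate k q = e' := ⟨_, rfl⟩
  have hcq : 1 ≤ b.1.count q := Multiset.count_pos.mpr hq
  have hsing : ∀ x : Q, ({x} : Multiset Q) = Multiset.replicate 1 x :=
    fun x => (Multiset.replicate_one x).symm
  have hcc : ∀ a, c.1.count a
      = b.1.count a - (if q = a then 1 else 0) + (if q' = a then 1 else 0) := by
    intro a
    rw [hν, hsing q, hsing q']
    simp only [Multiset.count_add, Multiset.count_sub, Multiset.count_replicate]
  have hlec : ∀ a, c.1.count a ≤ c'.1.count a := Multiset.le_iff_count.mp hle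
  have hec : ∀ a, e.count a = c'.1.count a - c.1.count a := by
    intro a; rw [← he]; simp [Multiset.count_sub]
  have he'c : ∀ a, e'.count a
      = e.count a - (if q' = a then k else 0) + (if q = a then k else 0) := by
    intro a
    rw [← he']
    simp only [Multiset.count_add, Multiset.count_sub, Multiset.count_replicate]
  have hsuppc : ∀ a, 0 < c'.1.count a → 0 < c.1.count a := by
    intro a ha
    have := Finset.ext_iff.mp hsupp a
    simp only [Multiset.mem_toFinset, ← Multiset.count_pos] at this
    exact this.mpr ha
  refine ⟨(b.1 + e', b.2), ⟨rfl, ?_, Multiset.le_add_right _ _⟩, ?_⟩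
  · -- support equality
    rw [Multiset.toFinset_add]
    symm
    rw [Finset.union_eq_left]
    intro a ha
    rw [Multiset.mem_toFinset, ← Multiset.count_pos] at ha ⊢
    have h1 := he'c a
    have h2 := hec a
    have h3 := hcc a
    have h4 := hlec a
    have h5 := hsuppc a
    rcases eq_or_ne q a with hqa | hqa <;> rcases eq_or_ne q' a with hqb | hqb <;>
      simp only [hqa, hqb, eq_self_iff_true, if_true, if_false] at h1 h3 hcq hk <;>
      omega
  · -- reach c'
    have hR : op = Op.R → b.2 = d := by
      intro hop
      rcases hreg with ⟨_, h1, _⟩ | ⟨hw, _⟩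
      · exact h1
      · rw [hop] at hw; cases hw
    have hd2 : c.2 = d := by
      rcases hreg with ⟨_, _, h1⟩ | ⟨_, h1⟩ <;> exact h1
    have hrep : Multiset.replicate (k + 1) q ≤ b.1 + e' := by
      rw [Multiset.le_iff_count]
      intro a
      have h1 := he'c a
      simp only [Multiset.count_add, Multiset.count_replicate]
      rcases eq_or_ne q a with hqa | hqa <;> rcases eq_or_ne q' a with hqb | hqb <;>
        simp only [hqa, hqb, eq_self_iff_true, if_true, if_false] at h1 hcq ⊢ <;>
        omega
    have hreach := steps_repeat T hT k (b.1 + e') b.2 hR hrep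
    have heq : b.1 + e' - Multiset.replicate (k + 1) q + Multiset.replicate (k + 1) q'
        = c'.1 := by
      ext a
      have h1 := he'c a
      have h2 := hec a
      have h3 := hcc a
      have h4 := hlec a
      simp only [Multiset.count_add, Multiset.count_sub, Multiset.count_replicate]
      rcases eq_or_ne q a with hqa | hqa <;> rcases eq_or_ne q' a with hqb | hqb <;>
        simp only [hqa, hqb, eq_self_iff_true, if_true, if_false] at h1 h3 hcq hk ⊢ <;>
        omega
    rw [heq] at hreach
    have hdc' : c'.2 = d := by rw [← hd, hd2]
    have hfin : (c'.1, d) = c' := by rw [← hdc']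
    rwa [hfin] at hreach

/-- copycat lemma: if `γ1 →* γ2` and `γ2 ⪯ γ2'`, then there is `γ1'`
with `γ1 ⪯ γ1'` and `γ1' →* γ2'`. -/
theorem stmt_2 {Q D : Type*} [DecidableEq Q]
    (T : Set (Q × Op × D × Q)) (hnb : Nonblock T) (hrt : ReadTotal T)
    (γ1 γ2 γ2' : Multiset Q × D)
    (h12 : Reach T γ1 γ2) (h2 : ConfLE γ2 γ2') :
    ∃ γ1' : Multiset Q × D, ConfLE γ1 γ1' ∧ Reach T γ1' γ2' := by
  induction h12 generalizing γ2' with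
  | refl => exact ⟨γ2', h2, Relation.ReflTransGen.refl⟩
  | tail hab hbc ih =>
    obtain ⟨b', hbb', hreach⟩ := lift_step T hbc h2
    obtain ⟨γ1', h1, hr⟩ := ih b' hbb'
    exact ⟨γ1', h1, hr.trans hreach⟩
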